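/- arXiv:2012.10208 — 3 statements merged into one kernel-verified Lean document; each statement's English description precedes it below -/
import Mathlib

section
/- For intervals [a₁,a₂] and [b₁,b₂] contained in [0,1] with a₁ ≤ a₂, b₁ ≤ b₂, and a₂−a₁+b₂−b₁ ≠ 0, the Xu–Da possibility degree satisfies P([a₁,a₂] ≥ [b₁,b₂]) + P([b₁,b₂] ≥ [a₁,a₂]) = 1. -/
noncomputable def xuDa (a1 a2 b1 b2 : ℝ) : ℝ :=
  max (1 - max ((b2 - a1) / (a2 - a1 + b2 - b1)) 0) 0

theorem stmt_5 (a1 a2 b1 b2 : ℝ)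
    (ha : a1 ∈ Set.Icc (0:ℝ) 1) (ha2 : a2 ∈ Set.Icc (0:ℝ) 1)
    (hb : b1 ∈ Set.Icc (0:ℝ) 1) (hb2 : b2 ∈ Set.Icc (0:ℝ) 1)
    (h1 : a1 ≤ a2) (h2 : b1 ≤ b2) (hne : a2 - a1 + b2 - b1 ≠ 0) :
    xuDa a1 a2 b1 b2 + xuDa b1 b2 a1 a2 = 1 := by
  have hd : 0 < a2 - a1 + b2 - b1 := by
    rcases lt_or_eq_of_le (by linarith : (0:ℝ) ≤ a2 - a1 + b2 - b1) with h | h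
    · exact h
    · exact absurd h.symm hne
  set d := a2 - a1 + b2 - b1 with hdd
  have hd2 : b2 - b1 + a2 - a1 = d := by rw [hdd]; ring
  have hsum : (b2 - a1) / d + (a2 - b1) / d = 1 := by
    rw [← add_div, div_eq_one_iff_eq hne]; ring
  unfold xuDa
  rw [hd2]
  set x := (b2 - a1) / d
  set y := (a2 - b1) / d
  rcases le_or_gt x 0 with hx | hx
  · have hy : 1 ≤ y := by linarith
    rw [max_eq_right hx, max_eq_left (by linarith : (0:ℝ) ≤ y)]
    rw [max_eq_right (by linarith : 1 - y ≤ 0)]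
    norm_num
  · rcases le_or_gt x 1 with hx1 | hx1
    · have hy0 : 0 ≤ y := by linarith
      have hy1 : y ≤ 1 := by linarith
      rw [max_eq_left hx.le, max_eq_left hy0,
        max_eq_left (by linarith : (0:ℝ) ≤ 1 - x),
        max_eq_left (by linarith : (0:ℝ) ≤ 1 - y)]
      linarith
    · have hy : y < 0 := by linarith
      rw [max_eq_left hx.le, max_eq_right hy.le,
        max_eq_right (by linarith : 1 - x ≤ 0)]
      norm_num
end

section
/- For intervals A=[a₁,a₂], B=[b₁,b₂] contained in [0,1] with a₁ ≤ a₂, b₁ ≤ b₂, and a₂−a₁+b₂−b₁ ≠ 0: the midpoint of A is strictly less than the midpoint of B if and only if P(A ≥ B) < 1/2. -/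
theorem stmt_8 (a1 a2 b1 b2 : ℝ)
    (ha : a1 ∈ Set.Icc (0:ℝ) 1) (ha2 : a2 ∈ Set.Icc (0:ℝ) 1)
    (hb : b1 ∈ Set.Icc (0:ℝ) 1) (hb2 : b2 ∈ Set.Icc (0:ℝ) 1)
    (h1 : a1 ≤ a2) (h2 : b1 ≤ b2) (hne : a2 - a1 + b2 - b1 ≠ 0) :
    (a1 + a2) / 2 < (b1 + b2) / 2 ↔ xuDa a1 a2 b1 b2 < 1 / 2 := by
  have hL : 0 < a2 - a1 + b2 - b1 := lt_of_le_of_ne (by linarith) (Ne.symm hne)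
  constructor
  · intro h
    have hd : 1/2 < (b2 - a1) / (a2 - a1 + b2 - b1) := by
      rw [lt_div_iff₀ hL]; linarith
    have hmax : max ((b2 - a1) / (a2 - a1 + b2 - b1)) 0 =
        (b2 - a1) / (a2 - a1 + b2 - b1) := max_eq_left (by linarith)
    unfold xuDa
    rw [hmax]
    exact max_lt (by linarith) (by norm_num)
  · intro h
    unfold xuDa at h
    have h1' := (max_lt_iff.mp h).1
    have hgt : (1:ℝ)/2 < max ((b2 - a1) / (a2 - a1 + b2 - b1)) 0 := by linarith
    have hd : 1/2 < (b2 - a1) / (a2 - a1 + b2 - b1) := by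
      rcases lt_max_iff.mp hgt with h' | h'
      · exact h'
      · norm_num at h'
    rw [lt_div_iff₀ hL] at hd
    linarith
end

section
/- For intervals A=[a₁,a₂], B=[b₁,b₂] contained in [0,1] with a₁ ≤ a₂, b₁ ≤ b₂, and a₂−a₁+b₂−b₁ ≠ 0: the midpoint of A is strictly greater than the midpoint of B if and only if P(A ≥ B) > 1/2. -/
theorem stmt_9 (a1 a2 b1 b2 : ℝ)
    (ha : a1 ∈ Set.Icc (0:ℝ) 1) (ha2 : a2 ∈ Set.Icc (0:ℝ) 1)
    (hb : b1 ∈ Set.Icc (0:ℝ) 1) (hb2 : b2 ∈ Set.Icc (0:ℝ) 1)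
    (h1 : a1 ≤ a2) (h2 : b1 ≤ b2) (hne : a2 - a1 + b2 - b1 ≠ 0) :
    (a1 + a2) / 2 > (b1 + b2) / 2 ↔ xuDa a1 a2 b1 b2 > 1 / 2 := by
  have hS : 0 < a2 - a1 + b2 - b1 := lt_of_le_of_ne (by linarith) (Ne.symm hne)
  unfold xuDa
  simp only [gt_iff_lt, lt_max_iff]
  constructor
  · intro h
    left
    have hq : (b2 - a1) / (a2 - a1 + b2 - b1) < 1 / 2 := by
      rw [div_lt_div_iff₀ hS (by norm_num)]
      linarith
    have : max ((b2 - a1) / (a2 - a1 + b2 - b1)) 0 < 1 / 2 :=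
      max_lt hq (by norm_num)
    linarith
  · rintro (h | h)
    · have : max ((b2 - a1) / (a2 - a1 + b2 - b1)) 0 < 1 / 2 := by linarith
      have hq : (b2 - a1) / (a2 - a1 + b2 - b1) < 1 / 2 :=
        lt_of_le_of_lt (le_max_left _ _) this
      rw [div_lt_div_iff₀ hS (by norm_num)] at hq
      linarith
    · norm_num at h
end
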